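/- Let G be a non-Hamiltonian graph on n vertices, C a longest cycle of G with a fixed orientation, R a component of G − V(C), and v_i, v_j distinct vertices of C joined by a path with all internal vertices in R. If v_i⁻v_i⁺ ∈ Ẽ(G), then v_i v_j⁻ ∉ Ẽ(G) and v_i v_j⁺ ∉ Ẽ(G). -/

import Mathlib

open SimpleGraph

/-- A vertex is heavy if its degree is at least half the number of vertices. -/
def Heavy {V : Type*} [Fintype V] (G : SimpleGraph V) (v : V) : Prop :=
  Fintype.card V ≤ 2 * (G.neighborSet v).ncard

/-- `{x,y} ∈ Ẽ(G)`: distinct vertices that are adjacent or have degree sum at least `n`. -/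
def TEdge {V : Type*} [Fintype V] (G : SimpleGraph V) (x y : V) : Prop :=
  x ≠ y ∧ (G.Adj x y ∨
    Fintype.card V ≤ (G.neighborSet x).ncard + (G.neighborSet y).ncard)

/-- `a` is the center and `b,c,d` the end vertices of an induced claw `K_{1,3}`. -/
def IsClaw {V : Type*} (G : SimpleGraph V) (a b c d : V) : Prop :=
  G.Adj a b ∧ G.Adj a c ∧ G.Adj a d ∧
    ¬ G.Adj b c ∧ ¬ G.Adj b d ∧ ¬ G.Adj c d ∧ b ≠ c ∧ b ≠ d ∧ c ≠ d

/-- Every claw has at least one heavy end vertex. -/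
def OneHeavy {V : Type*} [Fintype V] (G : SimpleGraph V) : Prop :=
  ∀ a b c d, IsClaw G a b c d → Heavy G b ∨ Heavy G c ∨ Heavy G d

/-- Every claw has at least two heavy end vertices. -/
def TwoHeavy {V : Type*} [Fintype V] (G : SimpleGraph V) : Prop :=
  ∀ a b c d, IsClaw G a b c d →
    (Heavy G b ∧ Heavy G c) ∨ (Heavy G b ∧ Heavy G d) ∨ (Heavy G c ∧ Heavy G d)

/-- Every claw has two end vertices with degree sum at least `n`. -/
def ClawHeavy {V : Type*} [Fintype V] (G : SimpleGraph V) : Prop :=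
  ∀ a b c d, IsClaw G a b c d →
    Fintype.card V ≤ (G.neighborSet b).ncard + (G.neighborSet c).ncard ∨
    Fintype.card V ≤ (G.neighborSet b).ncard + (G.neighborSet d).ncard ∨
    Fintype.card V ≤ (G.neighborSet c).ncard + (G.neighborSet d).ncard

/-- `G` contains no induced claw. -/
def ClawFree {V : Type*} (G : SimpleGraph V) : Prop :=
  ∀ a b c d, ¬ IsClaw G a b c d

/-- Almost distance-hereditary: in every connected induced subgraph the distance
between two vertices exceeds their distance in `G` by at most one. -/
def AlmostDH {V : Type*} (G : SimpleGraph V) : Prop :=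
  ∀ s : Set V, (G.induce s).Connected →
    ∀ x y : s, (G.induce s).dist x y ≤ G.dist (x : V) (y : V) + 1

/-- Distance-hereditary: every connected induced subgraph preserves distances. -/
def DistHered {V : Type*} (G : SimpleGraph V) : Prop :=
  ∀ s : Set V, (G.induce s).Connected →
    ∀ x y : s, (G.induce s).dist x y = G.dist (x : V) (y : V)

/-- A cycle in `G`, encoded as an injective cyclic sequence of `m ≥ 3` pairwise
adjacent-in-order vertices. -/
def IsCycleMap {V : Type*} (G : SimpleGraph V) (m : ℕ) (f : ZMod m → V) : Prop :=
  3 ≤ m ∧ Function.Injective f ∧ ∀ i, G.Adj (f i) (f (i + 1))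

/-- A longest cycle of `G`. -/
def IsLongestCycleMap {V : Type*} (G : SimpleGraph V) (m : ℕ) (f : ZMod m → V) : Prop :=
  IsCycleMap G m f ∧ ∀ (m' : ℕ) (f' : ZMod m' → V), IsCycleMap G m' f' → m' ≤ m

/-- `R` is a connected component of the subgraph of `G` induced on `W`. -/
def IsCompOf {V : Type*} (G : SimpleGraph V) (W R : Set V) : Prop :=
  R.Nonempty ∧ R ⊆ W ∧ (G.induce R).Connected ∧
    ∀ x ∈ R, ∀ y ∈ W, G.Adj x y → y ∈ R


open List

namespace L3C
variable {V : Type*} [Fintype V] [DecidableEq V] {G : SimpleGraph V}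

def CycList (G : SimpleGraph V) (c : List V) : Prop :=
  c.IsChain G.Adj ∧ ∀ x ∈ c.head?, ∀ y ∈ c.getLast?, G.Adj y x

lemma cycList_get {c : List V} (h : CycList G c) (i : ℕ) (hi : i < c.length) :
    G.Adj (c.get ⟨i, hi⟩) (c.get ⟨(i+1) % c.length, Nat.mod_lt _ (by omega)⟩) := by
  rcases Nat.lt_or_ge (i+1) c.length with h1 | h1
  · have e : (i+1) % c.length = i + 1 := Nat.mod_eq_of_lt h1
    simp only [e]
    exact List.isChain_iff_getElem.mp h.1 i (by omega)
  · have hne : c ≠ [] := by intro hc; simp [hc] at hi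
    have e0 : (i+1) % c.length = 0 := by
      have : i + 1 = c.length := by omega
      simp [this]
    have ei : i = c.length - 1 := by omega
    simp only [e0]
    simp only [ei]
    have h0 : c.get ⟨0, by omega⟩ = c.head hne := (List.get_mk_zero (by omega))
    have hl : c.get ⟨c.length - 1, by omega⟩ = c.getLast hne := by rw [List.getLast_eq_getElem]; rfl
    rw [h0, hl]
    exact h.2 _ (List.head?_eq_head hne) _ (List.getLast?_eq_getLast hne)

lemma cycList_of_get {c : List V} (hne : c ≠ [])
    (h : ∀ (i : ℕ) (hi : i < c.length),
      G.Adj (c.get ⟨i, hi⟩) (c.get ⟨(i+1) % c.length, Nat.mod_lt _ (by omega)⟩)) :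
    CycList G c := by
  have hlen : 0 < c.length := List.length_pos_iff.mpr hne
  constructor
  · rw [List.isChain_iff_getElem]
    intro i hi
    have e : (i+1) % c.length = i + 1 := Nat.mod_eq_of_lt (by omega)
    have := h i (by omega)
    simp only [e] at this
    exact this
  · intro x hx y hy
    rw [List.head?_eq_head hne, Option.mem_some_iff] at hx
    rw [List.getLast?_eq_getLast hne, Option.mem_some_iff] at hy
    have := h (c.length - 1) (by omega)
    have e0 : (c.length - 1 + 1) % c.length = 0 := by
      have : c.length - 1 + 1 = c.length := by omega
      simp [this]
    simp only [e0] at this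
    have h0 : c.get ⟨0, by omega⟩ = c.head hne := (List.get_mk_zero (by omega))
    have hl : c.get ⟨c.length - 1, by omega⟩ = c.getLast hne := by rw [List.getLast_eq_getElem]; rfl
    rw [h0, hl] at this
    rw [← hx, ← hy]
    exact this


lemma cycList_rotate {c : List V} (h : CycList G c) (n : ℕ) : CycList G (c.rotate n) := by
  rcases eq_or_ne c [] with rfl | hne
  · simp [CycList]
  have hlen : 0 < c.length := List.length_pos_iff.mpr hne
  have hrl : (c.rotate n).length = c.length := List.length_rotate c n
  apply cycList_of_get (by simp [← List.length_pos_iff, hrl, hlen])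
  intro i hi
  rw [List.get_rotate, List.get_rotate]
  have e1 : ((i + 1) % (c.rotate n).length + n) % c.length = ((i + n) % c.length + 1) % c.length := by
    rw [hrl, Nat.mod_add_mod, Nat.mod_add_mod]
    congr 1
    omega
  simp only [e1]
  exact cycList_get h ((i + n) % c.length) (Nat.mod_lt _ hlen)

lemma exists_cycleMap {c : List V} (h : CycList G c) (hnd : c.Nodup) (h3 : 3 ≤ c.length) :
    ∃ f' : ZMod c.length → V, IsCycleMap G c.length f' := by
  haveI : NeZero c.length := ⟨by omega⟩
  refine ⟨fun i : ZMod c.length => c.get ⟨i.val, i.val_lt⟩, h3, ?_, ?_⟩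
  · intro i j hij
    have := List.nodup_iff_injective_get.mp hnd hij
    exact ZMod.val_injective _ (congrArg Fin.val this)
  · intro i
    have e : (i + 1).val = (i.val + 1) % c.length := by
      haveI : Fact (1 < c.length) := ⟨by omega⟩
      rw [ZMod.val_add, ZMod.val_one]
    simp only [e]
    exact cycList_get h i.val i.val_lt

lemma length_le {m : ℕ} {f : ZMod m → V} (hC : IsLongestCycleMap G m f)
    {c : List V} (h : CycList G c) (hnd : c.Nodup) (h3 : 3 ≤ c.length) : c.length ≤ m :=
  hC.2 _ (exists_cycleMap h hnd h3).choose (exists_cycleMap h hnd h3).choose_spec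


lemma get_eq_of_eq (l : List V) {i j : ℕ} (hi : i < l.length) (hj : j < l.length)
    (h : i = j) : l.get ⟨i, hi⟩ = l.get ⟨j, hj⟩ := by subst h; rfl

lemma ore (l : List V) (hnd : l.Nodup) (hch : l.IsChain G.Adj) (h3 : 3 ≤ l.length)
    {x y : V} (hx : l.head? = some x) (hy : l.getLast? = some y)
    (hd : G.Adj x y ∨ Fintype.card V ≤ (G.neighborSet x).ncard + (G.neighborSet y).ncard) :
    ∃ c : List V, CycList G c ∧ c.Nodup ∧ l.length ≤ c.length := by
  classical
  have hne : l ≠ [] := by rintro rfl; simp at hx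
  set k := l.length with hk
  have hk3 : 3 ≤ k := h3
  have hx0 : l.get ⟨0, by omega⟩ = x := by
    rw [List.head?_eq_head hne, Option.some_inj] at hx
    rw [← hx]; exact List.get_mk_zero (by omega)
  have hyk : l.get ⟨k-1, by omega⟩ = y := by
    rw [List.getLast?_eq_getLast hne, Option.some_inj] at hy
    rw [← hy, List.getLast_eq_getElem]; rfl
  by_cases hadj : G.Adj x y
  · refine ⟨l, ⟨hch, ?_⟩, hnd, le_rfl⟩
    intro u hu v hv
    rw [hx, Option.mem_some_iff] at hu
    rw [hy, Option.mem_some_iff] at hv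
    subst hu; subst hv; exact hadj.symm
  replace hd := hd.resolve_left hadj
  set u : ℕ → V := fun i => l.getD i x with hu
  by_cases hcross : ∃ i < k - 1, G.Adj x (u (i+1)) ∧ G.Adj y (u i)
  · obtain ⟨i, hik, hxi, hyi⟩ := hcross
    have hui : u i = l.get ⟨i, by omega⟩ := List.getD_eq_getElem l x (by omega)
    have hui1 : u (i+1) = l.get ⟨i+1, by omega⟩ := List.getD_eq_getElem l x (by omega)
    have hdropne : l.drop (i+1) ≠ [] := by
      apply List.ne_nil_of_length_pos
      rw [List.length_drop]; omega
    have htakene : l.take (i+1) ≠ [] := by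
      apply List.ne_nil_of_length_pos
      rw [List.length_take]; omega
    refine ⟨l.take (i+1) ++ (l.drop (i+1)).reverse, ⟨?_, ?_⟩, ?_, ?_⟩
    · rw [List.isChain_append]
      refine ⟨hch.take _, List.isChain_reverse.mpr ((hch.drop _).imp fun a b hab => hab.symm), ?_⟩
      intro w hw v hv
      have hwt : (l.take (i+1)).getLast? = some (l.get ⟨i, by omega⟩) := by
        rw [List.getLast?_take, if_neg (show ¬ (i+1 = 0) by omega),
          List.getElem?_eq_getElem (show i + 1 - 1 < l.length by omega)]
        show some _ = some _
        simp only [Option.some_inj]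
        rw [List.get_eq_getElem]
        congr 1
      rw [hwt, Option.mem_some_iff] at hw
      have hvt : ((l.drop (i+1)).reverse).head? = some y := by
        rw [List.head?_reverse, List.getLast?_eq_getLast hdropne, List.getLast_drop]
        rw [List.getLast?_eq_getLast hne, Option.some_inj] at hy
        rw [hy]
      rw [hvt, Option.mem_some_iff] at hv
      subst hw; subst hv
      rw [hui] at hyi
      exact hyi.symm
    · intro w hw v hv
      rw [List.head?_append_of_ne_nil _ htakene, List.head?_take,
        if_neg (by omega : ¬ (i+1 = 0)), hx, Option.mem_some_iff] at hw
      rw [List.getLast?_append, List.getLast?_reverse, List.head?_drop,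
        List.getElem?_eq_getElem (show i + 1 < l.length by omega)] at hv
      have : (some l[i+1]).or (l.take (i+1)).getLast? = some l[i+1] := rfl
      rw [this, Option.mem_some_iff] at hv
      subst hw; subst hv
      rw [hui1, List.get_eq_getElem] at hxi
      exact hxi.symm
    · have h2 : (l.take (i+1) ++ l.drop (i+1)).Nodup := by
        rw [List.take_append_drop]; exact hnd
      rw [List.nodup_append] at h2
      refine List.nodup_append.mpr ⟨h2.1, List.nodup_reverse.mpr h2.2.1, ?_⟩
      intro a ha b hb
      exact h2.2.2 a ha b (List.mem_reverse.mp hb)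
    · simp only [List.length_append, List.length_take, List.length_reverse, List.length_drop]
      omega
  · push_neg at hcross
    have hncard : ∀ v : V, (G.neighborSet v).ncard = (G.neighborFinset v).card := by
      intro v
      rw [← Set.ncard_coe_finset, SimpleGraph.neighborFinset_def, Set.coe_toFinset]
    have hlFcard : l.toFinset.card = k := List.toFinset_card_of_nodup hnd
    set S := (Finset.range (k-1)).filter (fun i => G.Adj x (u (i+1))) with hS
    set T := (Finset.range (k-1)).filter (fun i => G.Adj y (u i)) with hT
    have hgetu : ∀ j (hj : j < k), u j = l.get ⟨j, hj⟩ := fun j hj => List.getD_eq_getElem l x hj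
    have hSx : (G.neighborFinset x ∩ l.toFinset).card ≤ S.card := by
      apply Finset.card_le_card_of_injOn (fun v => l.idxOf v - 1)
      · intro v hv
        rw [Finset.mem_coe, Finset.mem_inter, SimpleGraph.mem_neighborFinset, List.mem_toFinset] at hv
        have hj : l.idxOf v < k := List.idxOf_lt_length_iff.mpr hv.2
        have hgv : l.get ⟨l.idxOf v, hj⟩ = v := List.idxOf_get hj
        have hj0 : l.idxOf v ≠ 0 := by
          intro hcon
          apply G.loopless.irrefl x
          nth_rewrite 2 [← hx0]
          have : l.get ⟨l.idxOf v, hj⟩ = l.get ⟨0, by omega⟩ := get_eq_of_eq l _ _ (by omega)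
          rw [this] at hgv
          nth_rewrite 1 [← hgv] at hv
          exact hv.1
        rw [Finset.mem_coe, hS, Finset.mem_filter, Finset.mem_range]
        dsimp only
        constructor
        · omega
        · have : l.idxOf v - 1 + 1 = l.idxOf v := by omega
          rw [this, hgetu _ hj, hgv]
          exact hv.1
      · intro v hv w hw hvw
        simp only [Finset.coe_inter, Set.mem_inter_iff, Finset.mem_coe,
          SimpleGraph.mem_neighborFinset, List.mem_toFinset] at hv hw
        have hjv : l.idxOf v < k := List.idxOf_lt_length_iff.mpr hv.2
        have hjw : l.idxOf w < k := List.idxOf_lt_length_iff.mpr hw.2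
        have hv0 : l.idxOf v ≠ 0 := by
          intro hcon
          apply G.loopless.irrefl x
          have hgv : l.get ⟨l.idxOf v, hjv⟩ = v := List.idxOf_get hjv
          have : l.get ⟨l.idxOf v, hjv⟩ = l.get ⟨0, by omega⟩ := get_eq_of_eq l _ _ (by omega)
          rw [this, hx0] at hgv
          rw [← hgv] at hv
          exact hv.1
        have hw0 : l.idxOf w ≠ 0 := by
          intro hcon
          apply G.loopless.irrefl x
          have hgw : l.get ⟨l.idxOf w, hjw⟩ = w := List.idxOf_get hjw
          have : l.get ⟨l.idxOf w, hjw⟩ = l.get ⟨0, by omega⟩ := get_eq_of_eq l _ _ (by omega)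
          rw [this, hx0] at hgw
          rw [← hgw] at hw
          exact hw.1
        have hvw' : l.idxOf v - 1 = l.idxOf w - 1 := hvw
        rw [← List.idxOf_get hjv, ← List.idxOf_get hjw]
        exact get_eq_of_eq l _ _ (by omega)
    have hTy : (G.neighborFinset y ∩ l.toFinset).card ≤ T.card := by
      apply Finset.card_le_card_of_injOn (fun v => l.idxOf v)
      · intro v hv
        rw [Finset.mem_coe, Finset.mem_inter, SimpleGraph.mem_neighborFinset, List.mem_toFinset] at hv
        have hj : l.idxOf v < k := List.idxOf_lt_length_iff.mpr hv.2
        have hgv : l.get ⟨l.idxOf v, hj⟩ = v := List.idxOf_get hj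
        have hjk : l.idxOf v ≠ k - 1 := by
          intro hcon
          apply G.loopless.irrefl y
          nth_rewrite 2 [← hyk]
          have : l.get ⟨l.idxOf v, hj⟩ = l.get ⟨k-1, by omega⟩ := get_eq_of_eq l _ _ (by omega)
          rw [this] at hgv
          nth_rewrite 1 [← hgv] at hv
          exact hv.1
        rw [Finset.mem_coe, hT, Finset.mem_filter, Finset.mem_range]
        dsimp only
        refine ⟨by omega, ?_⟩
        rw [hgetu _ hj, hgv]
        exact hv.1
      · intro v hv w hw hvw
        simp only [Finset.coe_inter, Set.mem_inter_iff, Finset.mem_coe,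
          SimpleGraph.mem_neighborFinset, List.mem_toFinset] at hv hw
        have hjv : l.idxOf v < k := List.idxOf_lt_length_iff.mpr hv.2
        have hjw : l.idxOf w < k := List.idxOf_lt_length_iff.mpr hw.2
        rw [← List.idxOf_get hjv, ← List.idxOf_get hjw]
        exact get_eq_of_eq l _ _ hvw
    have hST : Disjoint S T := by
      rw [Finset.disjoint_left]
      intro i hiS hiT
      rw [hS, Finset.mem_filter, Finset.mem_range] at hiS
      rw [hT, Finset.mem_filter] at hiT
      exact (hcross i hiS.1 hiS.2) hiT.2
    have hSTcard : S.card + T.card ≤ k - 1 := by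
      rw [← Finset.card_union_of_disjoint hST]
      calc (S ∪ T).card ≤ (Finset.range (k-1)).card := by
            apply Finset.card_le_card
            rw [Finset.union_subset_iff]
            exact ⟨Finset.filter_subset _ _, Finset.filter_subset _ _⟩
        _ = k - 1 := Finset.card_range _
    have hdcard : Fintype.card V ≤ (G.neighborFinset x).card + (G.neighborFinset y).card := by
      rw [hncard, hncard] at hd
      exact hd
    have hxsplit : (G.neighborFinset x ∩ l.toFinset).card + (G.neighborFinset x \ l.toFinset).card = (G.neighborFinset x).card :=
      Finset.card_inter_add_card_sdiff _ _
    have hysplit : (G.neighborFinset y ∩ l.toFinset).card + (G.neighborFinset y \ l.toFinset).card = (G.neighborFinset y).card :=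
      Finset.card_inter_add_card_sdiff _ _
    have hkn : k ≤ Fintype.card V := hlFcard ▸ Finset.card_le_univ l.toFinset
    have hnotdisj : ¬ Disjoint (G.neighborFinset x \ l.toFinset) (G.neighborFinset y \ l.toFinset) := by
      intro hdisj
      have hsub : (G.neighborFinset x \ l.toFinset) ∪ (G.neighborFinset y \ l.toFinset) ⊆ l.toFinsetᶜ := by
        rw [Finset.union_subset_iff]
        constructor <;>
        · intro a ha
          rw [Finset.mem_sdiff] at ha
          rw [Finset.mem_compl]
          exact ha.2
      have h1 : (G.neighborFinset x \ l.toFinset).card + (G.neighborFinset y \ l.toFinset).card ≤ Fintype.card V - k := by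
        rw [← Finset.card_union_of_disjoint hdisj]
        calc ((G.neighborFinset x \ l.toFinset) ∪ (G.neighborFinset y \ l.toFinset)).card ≤ l.toFinsetᶜ.card := Finset.card_le_card hsub
          _ = Fintype.card V - k := by rw [Finset.card_compl, hlFcard]
      omega
    obtain ⟨z, hz⟩ := Finset.not_disjoint_iff.mp hnotdisj
    rw [Finset.mem_sdiff, Finset.mem_sdiff, SimpleGraph.mem_neighborFinset,
      SimpleGraph.mem_neighborFinset, List.mem_toFinset] at hz
    obtain ⟨⟨hxz, hzl⟩, hyz, _⟩ := hz
    refine ⟨l ++ [z], ⟨?_, ?_⟩, ?_, by simp only [List.length_append, List.length_singleton]; omega⟩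
    · rw [List.isChain_append]
      refine ⟨hch, List.isChain_singleton z, ?_⟩
      intro w hw v hv
      rw [hy, Option.mem_some_iff] at hw
      simp only [List.head?_cons, Option.mem_some_iff] at hv
      subst hw; subst hv
      exact hyz
    · intro w hw v hv
      rw [List.head?_append_of_ne_nil _ hne, hx, Option.mem_some_iff] at hw
      rw [List.getLast?_concat, Option.mem_some_iff] at hv
      subst hw; subst hv
      exact hxz.symm
    · rw [List.nodup_append]
      refine ⟨hnd, List.nodup_singleton z, ?_⟩
      intro a ha b hb
      rw [List.mem_singleton] at hb
      subst hb
      exact fun h => hzl (h ▸ ha)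


lemma deloop (x1 y1 : V) (c : List V) (h3 : 3 ≤ c.length) (hnd : c.Nodup)
    (h : CycList (G ⊔ SimpleGraph.fromEdgeSet {s(x1,y1)}) c) :
    (∃ c' : List V, c'.length = c.length ∧ c'.Nodup ∧ CycList G c') ∨
    (∃ c' : List V, c'.length = c.length ∧ c'.Nodup ∧ c'.IsChain G.Adj ∧
      ((c'.head? = some x1 ∧ c'.getLast? = some y1) ∨
       (c'.head? = some y1 ∧ c'.getLast? = some x1))) := by
  classical
  have hne : c ≠ [] := by intro hcon; rw [hcon] at h3; simp at h3
  have hlen : 0 < c.length := List.length_pos_iff.mpr hne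
  by_cases hall : ∀ (i : ℕ) (hi : i < c.length),
      G.Adj (c.get ⟨i, hi⟩) (c.get ⟨(i+1) % c.length, Nat.mod_lt _ (by omega)⟩)
  · exact Or.inl ⟨c, rfl, hnd, cycList_of_get hne hall⟩
  push_neg at hall
  obtain ⟨i, hi, hbad⟩ := hall
  have hG1 := cycList_get h i hi
  rw [SimpleGraph.sup_adj] at hG1
  replace hG1 := hG1.resolve_left hbad
  rw [SimpleGraph.fromEdgeSet_adj, Set.mem_singleton_iff] at hG1
  set s := (i+1) % c.length with hs
  have hslt : s < c.length := Nat.mod_lt _ (by omega)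
  set r := c.rotate s with hr
  have hrlen : r.length = c.length := List.length_rotate c s
  have hrne : r ≠ [] := by
    intro hcon
    rw [hcon] at hrlen
    simp at hrlen
    omega
  have hrnd : r.Nodup := List.nodup_rotate.mpr hnd
  have hrcyc : CycList (G ⊔ SimpleGraph.fromEdgeSet {s(x1,y1)}) r := cycList_rotate h s
  have hhead : r.get ⟨0, by omega⟩ = c.get ⟨s, hslt⟩ := by
    have h0 := List.get_rotate c s ⟨0, by rw [List.length_rotate]; omega⟩
    exact h0.trans (get_eq_of_eq _ _ _ (by simp [Nat.mod_eq_of_lt hslt]))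
  have hlast : r.get ⟨r.length - 1, by omega⟩ = c.get ⟨i, hi⟩ := by
    have h0 := List.get_rotate c s ⟨r.length - 1, by rw [List.length_rotate]; omega⟩
    refine h0.trans (get_eq_of_eq _ _ _ ?_)
    show (r.length - 1 + s) % c.length = i
    rw [hrlen, hs, Nat.add_mod_mod]
    have e2 : c.length - 1 + (i + 1) = c.length + i := by omega
    rw [e2, Nat.add_mod_left, Nat.mod_eq_of_lt hi]
  have hchain : r.IsChain G.Adj := by
    rw [List.isChain_iff_getElem]
    intro j hj
    have hadj := cycList_get hrcyc j (by omega)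
    have e : (j+1) % r.length = j + 1 := Nat.mod_eq_of_lt (by omega)
    simp only [e] at hadj
    rw [SimpleGraph.sup_adj] at hadj
    refine hadj.resolve_right ?_
    intro h'
    rw [SimpleGraph.fromEdgeSet_adj, Set.mem_singleton_iff] at h'
    have hpair : s(r.get ⟨j, by omega⟩, r.get ⟨j+1, by omega⟩)
        = s(c.get ⟨i, hi⟩, c.get ⟨s, hslt⟩) := by rw [h'.1, ← hG1.1]
    have hinj : Function.Injective r.get := List.nodup_iff_injective_get.mp hrnd
    rcases Sym2.eq_iff.mp hpair with ⟨h1, h2⟩ | ⟨h1, h2⟩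
    · have : j = r.length - 1 := congrArg Fin.val (hinj (h1.trans hlast.symm))
      omega
    · have e1 : j = 0 := congrArg Fin.val (hinj (h1.trans hhead.symm))
      have e2 : j + 1 = r.length - 1 := congrArg Fin.val (hinj (h2.trans hlast.symm))
      omega
  refine Or.inr ⟨r, hrlen, hrnd, hchain, ?_⟩
  have hh : r.head? = some (c.get ⟨s, hslt⟩) := by
    rw [List.head?_eq_head hrne, ← hhead]
    congr 1
    exact (List.get_mk_zero (by omega)).symm
  have hl : r.getLast? = some (c.get ⟨i, hi⟩) := by
    rw [List.getLast?_eq_getLast hrne, ← hlast]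
    congr 1
    rw [List.getLast_eq_getElem]; rfl
  rcases Sym2.eq_iff.mp hG1.1 with ⟨h1, h2⟩ | ⟨h1, h2⟩
  · right
    rw [hh, hl, h1, h2]
    exact ⟨rfl, rfl⟩
  · left
    rw [hh, hl, h1, h2]
    exact ⟨rfl, rfl⟩


lemma main_aux (G : SimpleGraph V) (m : ℕ) (f : ZMod m → V) (hC : IsLongestCycleMap G m f)
    (R : Set V) (hR : IsCompOf G (Set.range f)ᶜ R)
    (a b : ZMod m) (hab : a ≠ b)
    (p : G.Walk (f a) (f b)) (hp : p.IsPath) (hlen : 2 ≤ p.length)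
    (hint : ∀ x ∈ p.support, x ≠ f a → x ≠ f b → x ∈ R)
    (hvi : TEdge G (f (a - 1)) (f (a + 1))) :
    ¬ TEdge G (f a) (f (b - 1)) := by
  intro hvj
  classical
  obtain ⟨hm3, hfinj, hfadj⟩ := hC.1
  haveI : NeZero m := ⟨by omega⟩
  set x1 := f (a - 1) with hx1def
  set y1 := f (a + 1) with hy1def
  set G1 := G ⊔ SimpleGraph.fromEdgeSet {s(x1, y1)} with hG1
  have hGle : ∀ {u v : V}, G.Adj u v → G1.Adj u v := by
    intro u v h
    rw [hG1, SimpleGraph.sup_adj]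
    exact Or.inl h
  set d := (b - a).val with hd
  have hdm : d < m := ZMod.val_lt _
  have hdcast : (d : ZMod m) = b - a := by rw [hd, ZMod.natCast_val, ZMod.cast_id]
  have hd0 : d ≠ 0 := by
    intro h0
    apply hab
    have h1 : b - a = 0 := by rw [← hdcast, h0, Nat.cast_zero]
    have := sub_eq_zero.mp h1
    exact this.symm
  have hd1 : d ≠ 1 := by
    intro h1
    apply hvj.1
    congr 1
    have h2 : b - a = 1 := by rw [← hdcast, h1, Nat.cast_one]
    have : b = a + 1 := by rw [← h2]; ring
    rw [this]; ring
  have hd2 : 2 ≤ d := by omega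
  -- offset list
  set os : List ℕ := List.range' (d+1) (m-1-d) ++ List.range' 1 (d-1) with hos
  have hosmem : ∀ t ∈ os, (1 ≤ t ∧ t < m) ∧ t ≠ d := by
    intro t ht
    rw [hos, List.mem_append, List.mem_range'_1, List.mem_range'_1] at ht
    rcases ht with h | h
    · exact ⟨⟨by omega, by omega⟩, by omega⟩
    · exact ⟨⟨by omega, by omega⟩, by omega⟩
  have hoslen : os.length = m - 2 := by
    rw [hos, List.length_append, List.length_range', List.length_range']
    omega
  have hosnd : os.Nodup := by
    rw [hos]
    apply List.Nodup.append List.nodup_range' List.nodup_range'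
    intro t ht1 ht2
    rw [List.mem_range'_1] at ht1 ht2
    omega
  set L : List V := os.map (fun t : ℕ => f (a + (t : ZMod m))) with hL
  have hfoff : ∀ s t : ℕ, s < m → t < m → f (a + (s:ZMod m)) = f (a + (t:ZMod m)) → s = t := by
    intro s t hs ht hst
    have h1 := add_left_cancel (hfinj hst)
    have h2 : ((s:ℕ):ZMod m).val = ((t:ℕ):ZMod m).val := congrArg ZMod.val h1
    rwa [ZMod.val_cast_of_lt hs, ZMod.val_cast_of_lt ht] at h2
  have hLnd : L.Nodup := by
    rw [hL]
    apply List.Nodup.map_on _ hosnd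
    intro s hs t ht hst
    exact hfoff s t (hosmem s hs).1.2 (hosmem t ht).1.2 hst
  have hLlen : L.length = m - 2 := by rw [hL, List.length_map, hoslen]
  -- walk support facts
  have hsupne : p.support ≠ [] := p.support_ne_nil
  have hsuphead : p.support.head? = some (f a) := by rw [p.support_eq_cons]; rfl
  have hsuplast : p.support.getLast? = some (f b) := by
    rw [List.getLast?_eq_getLast hsupne]
    exact congrArg some p.getLast_support
  -- vertex identities
  have hfb : f b = f (a + (d : ZMod m)) := by
    congr 1
    rw [hdcast]; ring
  have hfb1 : f (b - 1) = f (a + ((d-1 : ℕ) : ZMod m)) := by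
    congr 1
    rw [Nat.cast_sub (by omega), Nat.cast_one, hdcast]; ring
  have hx1off : x1 = f (a + ((m-1 : ℕ) : ZMod m)) := by
    rw [hx1def]
    congr 1
    rw [Nat.cast_sub (by omega), Nat.cast_one, ZMod.natCast_self]; ring
  have hy1off : y1 = f (a + ((1 : ℕ) : ZMod m)) := by
    rw [hy1def]
    congr 1
    rw [Nat.cast_one]
  have hadjoff : ∀ t : ℕ, G.Adj (f (a + (t:ZMod m))) (f (a + ((t+1:ℕ) : ZMod m))) := by
    intro t
    have h1 := hfadj (a + (t : ZMod m))
    have h2 : f (a + ((t+1:ℕ) : ZMod m)) = f (a + (t:ZMod m) + 1) := by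
      congr 1
      push_cast
      ring
    rw [h2]
    exact h1
  have hvirt : G1.Adj (f (a + ((m-1:ℕ) : ZMod m))) (f (a + ((1:ℕ) : ZMod m))) := by
    rw [← hx1off, ← hy1off, hG1, SimpleGraph.sup_adj]
    right
    rw [SimpleGraph.fromEdgeSet_adj]
    exact ⟨Set.mem_singleton _, hvi.1⟩
  -- chain of L
  have hrangechain : ∀ (st n : ℕ),
      List.IsChain (fun (u v : ℕ) => G1.Adj (f (a + (u:ZMod m))) (f (a + (v:ZMod m)))) (List.range' st n) := by
    intro st n
    induction n generalizing st with
    | zero => simp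
    | succ n ih =>
      cases n with
      | zero => simp
      | succ n =>
        rw [List.range'_succ, List.range'_succ, List.isChain_cons_cons]
        refine ⟨hGle (hadjoff st), ?_⟩
        rw [← List.range'_succ]
        exact ih (st+1)
  have hrangelast : ∀ (st n : ℕ), 0 < n → (List.range' st n).getLast? = some (st + n - 1) := by
    intro st n hn
    obtain ⟨n', rfl⟩ : ∃ n', n = n' + 1 := ⟨n-1, by omega⟩
    rw [List.range'_concat, List.getLast?_concat]
    congr 1
    omega
  have hoschain : List.IsChain (fun (u v : ℕ) => G1.Adj (f (a + (u:ZMod m))) (f (a + (v:ZMod m)))) os := by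
    rw [hos, List.isChain_append]
    refine ⟨hrangechain _ _, hrangechain _ _, ?_⟩
    intro u hu v hv
    rcases Nat.eq_zero_or_pos (m-1-d) with hz | hz
    · rw [hz] at hu; simp at hu
    rw [hrangelast _ _ hz, Option.mem_some_iff] at hu
    obtain ⟨k', hk'⟩ : ∃ k', d - 1 = k' + 1 := ⟨d-2, by omega⟩
    rw [hk', List.range'_succ] at hv
    simp only [List.head?_cons, Option.mem_some_iff] at hv
    subst hu; subst hv
    have e1 : d + 1 + (m-1-d) - 1 = m - 1 := by omega
    rw [e1]
    exact hvirt
  have hLchain : L.IsChain G1.Adj := by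
    rw [hL, List.isChain_map]
    exact hoschain
  -- the big path Q
  set Q : List V := p.support ++ L with hQ
  have hQchain : Q.IsChain G1.Adj := by
    rw [hQ, List.isChain_append]
    refine ⟨(p.isChain_adj_support).imp (fun u v h => hGle h), hLchain, ?_⟩
    intro u hu v hv
    rw [hsuplast, Option.mem_some_iff] at hu
    subst hu
    rw [hL, List.head?_map] at hv
    rcases Nat.eq_zero_or_pos (m-1-d) with hz | hz
    · have hosr : os = List.range' 1 (d-1) := by
        rw [hos, hz, List.range'_zero, List.nil_append]
      obtain ⟨k', hk'⟩ : ∃ k', d - 1 = k' + 1 := ⟨d-2, by omega⟩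
      rw [hosr, hk', List.range'_succ] at hv
      simp only [List.head?_cons, Option.map_some, Option.mem_some_iff] at hv
      subst hv
      have hdm1 : d = m - 1 := by omega
      have hfbm : f b = f (a + ((m-1 : ℕ) : ZMod m)) := by
        have e2 : ((d:ℕ) : ZMod m) = ((m-1:ℕ) : ZMod m) := by rw [hdm1]
        rw [hfb, e2]
      rw [hfbm]
      exact hvirt
    · have hosr : os.head? = some (d+1) := by
        obtain ⟨k', hk'⟩ : ∃ k', m - 1 - d = k' + 1 := ⟨m-1-d-1, by omega⟩
        rw [hos, hk', List.range'_succ]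
        rfl
      rw [hosr, Option.map_some, Option.mem_some_iff] at hv
      subst hv
      rw [hfb]
      exact hGle (hadjoff d)
  have hQnd : Q.Nodup := by
    rw [hQ, List.nodup_append]
    refine ⟨hp.support_nodup, hLnd, ?_⟩
    intro v hv w hvL hvw
    subst hvw
    rw [hL, List.mem_map] at hvL
    obtain ⟨t, ht, hft⟩ := hvL
    by_cases hva : v = f a
    · have : (0:ℕ) = t := by
        apply hfoff 0 t (by omega) (hosmem t ht).1.2
        rw [Nat.cast_zero, add_zero, hft, hva]
      have := (hosmem t ht).1.1
      omega
    by_cases hvb : v = f b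
    · have : d = t := by
        apply hfoff d t hdm (hosmem t ht).1.2
        rw [← hfb, hft, hvb]
      exact (hosmem t ht).2 this.symm
    · have hvR : v ∈ R := hint v hv hva hvb
      have := hR.2.1 hvR
      rw [Set.mem_compl_iff] at this
      exact this ⟨a + (t : ZMod m), hft⟩
  have hQhead : Q.head? = some (f a) := by
    rw [hQ, List.head?_append_of_ne_nil _ hsupne, hsuphead]
  have hQlast : Q.getLast? = some (f (b-1)) := by
    rw [hQ, List.getLast?_append, hL, List.getLast?_map, hos, List.getLast?_append,
      hrangelast 1 (d-1) (by omega)]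
    have e1 : 1 + (d-1) - 1 = d - 1 := by omega
    rw [e1]
    show some (f (a + ((d-1:ℕ) : ZMod m))) = some (f (b-1))
    rw [hfb1]
  have hQlen : m + 1 ≤ Q.length := by
    rw [hQ, List.length_append, p.length_support, hLlen]
    omega
  -- apply ore in G1
  have hdeg1 : G1.Adj (f a) (f (b-1)) ∨
      Fintype.card V ≤ (G1.neighborSet (f a)).ncard + (G1.neighborSet (f (b-1))).ncard := by
    rcases hvj.2 with h | h
    · exact Or.inl (hGle h)
    · right
      have hmono : ∀ v : V, (G.neighborSet v).ncard ≤ (G1.neighborSet v).ncard := by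
        intro v
        apply Set.ncard_le_ncard _ (Set.toFinite _)
        intro w hw
        rw [SimpleGraph.mem_neighborSet] at hw ⊢
        exact hGle hw
      calc Fintype.card V ≤ _ := h
        _ ≤ _ := Nat.add_le_add (hmono _) (hmono _)
  obtain ⟨c, hccyc, hcnd, hclen⟩ := ore (G := G1) Q hQnd hQchain (by omega) hQhead hQlast hdeg1
  have hc3 : 3 ≤ c.length := by omega
  rcases deloop x1 y1 c hc3 hcnd hccyc with ⟨c', hc'len, hc'nd, hc'cyc⟩ | ⟨c', hc'len, hc'nd, hc'chain, hends⟩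
  · have := length_le hC hc'cyc hc'nd (by omega)
    omega
  · rcases hends with ⟨hh, hl⟩ | ⟨hh, hl⟩
    · obtain ⟨c'', hc''cyc, hc''nd, hc''len⟩ := ore (G := G) c' hc'nd hc'chain (by omega) hh hl
        hvi.2
      have := length_le hC hc''cyc hc''nd (by omega)
      omega
    · obtain ⟨c'', hc''cyc, hc''nd, hc''len⟩ := ore (G := G) c' hc'nd hc'chain (by omega) hh hl
        (by rcases hvi.2 with h | h
            · exact Or.inl h.symm
            · right
              omega)
      have := length_le hC hc''cyc hc''nd (by omega)
      omega


lemma tedge_symm {x y : V} (h : TEdge G x y) : TEdge G y x :=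
  ⟨h.1.symm, h.2.imp SimpleGraph.Adj.symm (by omega)⟩

end L3C

theorem lemma3c {V : Type*} [Fintype V] [DecidableEq V] (G : SimpleGraph V)
    (hnh : ¬ G.IsHamiltonian)
    (m : ℕ) (f : ZMod m → V) (hC : IsLongestCycleMap G m f)
    (R : Set V) (hR : IsCompOf G (Set.range f)ᶜ R)
    (a b : ZMod m) (hab : a ≠ b)
    (p : G.Walk (f a) (f b)) (hp : p.IsPath) (hlen : 2 ≤ p.length)
    (hint : ∀ x ∈ p.support, x ≠ f a → x ≠ f b → x ∈ R)
    (hvi : TEdge G (f (a - 1)) (f (a + 1))) :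
    ¬ TEdge G (f a) (f (b - 1)) ∧ ¬ TEdge G (f a) (f (b + 1)) := by
  constructor
  · exact L3C.main_aux G m f hC R hR a b hab p hp hlen hint hvi
  · set g : ZMod m → V := fun i => f (-i) with hg
    have hgf : ∀ i : ZMod m, g (-i) = f i := by
      intro i
      rw [hg]
      simp
    have hCg : IsLongestCycleMap G m g := by
      obtain ⟨⟨hm3, hfinj, hfadj⟩, hmax⟩ := hC
      refine ⟨⟨hm3, ?_, ?_⟩, hmax⟩
      · intro i j hij
        exact neg_injective (hfinj hij)
      · intro i
        have h1 := hfadj (-(i+1))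
        have e1 : -(i+1) + 1 = -i := by ring
        rw [e1] at h1
        exact h1.symm
    have hrange : Set.range g = Set.range f := by
      ext v
      constructor
      · rintro ⟨i, rfl⟩
        exact ⟨-i, rfl⟩
      · rintro ⟨i, rfl⟩
        exact ⟨-i, hgf i⟩
    have hRg : IsCompOf G (Set.range g)ᶜ R := by rw [hrange]; exact hR
    have hga : g (-a) = f a := hgf a
    have hgb : g (-b) = f b := hgf b
    have hgb1 : g (-b - 1) = f (b + 1) := by
      rw [hg]
      congr 1
      ring
    have hga1 : g (-a - 1) = f (a + 1) := by
      rw [hg]; congr 1; ring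
    have hga2 : g (-a + 1) = f (a - 1) := by
      rw [hg]; congr 1; ring
    set p' : G.Walk (g (-a)) (g (-b)) := p.copy hga.symm hgb.symm with hp'
    have h2 := L3C.main_aux G m g hCg R hRg (-a) (-b)
      (fun h => hab (neg_injective h)) p'
      (by rw [hp', SimpleGraph.Walk.isPath_copy]; exact hp)
      (by rw [hp', SimpleGraph.Walk.length_copy]; exact hlen)
      (by
        intro x hx hxa hxb
        rw [hp', SimpleGraph.Walk.support_copy] at hx
        exact hint x hx (by rwa [hga] at hxa) (by rwa [hgb] at hxb))
      (by
        rw [hga1, hga2]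
        exact L3C.tedge_symm hvi)
    rw [hga, hgb1] at h2
    exact h2
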